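/- Let 1 < p < q < ∞ and r = q/(q−p). Then the operator R_{p,q} g(t) = ( t^{-1} ∫_0^{t^r} (g^*(s))^p ds )^{1/p} is bounded from L^p(0,∞) to weak-L^p(0,∞): sup_{t>0} t^{1/p} (R_{p,q} g)^*(t) ≤ ‖g‖_{L^p(0,∞)} for every g ∈ L^p(0,∞). -/

import Mathlib

open MeasureTheory Set

/-- The nonincreasing rearrangement (w.r.t. Lebesgue measure on `(0,∞)`) of `g`. -/
noncomputable def rearr (g : ℝ → ℝ) (t : ℝ) : ℝ :=
  sInf {l : ℝ | 0 ≤ l ∧ volume {x : ℝ | 0 < x ∧ l < |g x|} ≤ ENNReal.ofReal t}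

/-- The operator `R_{p,q} g(t) = ( t⁻¹ ∫_0^{t^r} (g^*(s))^p ds )^{1/p}`, `r = q/(q-p)`. -/
noncomputable def Rop (p q : ℝ) (g : ℝ → ℝ) (t : ℝ) : ℝ :=
  (t⁻¹ * ∫ s in Set.Ioc (0:ℝ) (t ^ (q / (q - p))), rearr g s ^ p) ^ (1 / p)

lemma rearr_nonneg (g : ℝ → ℝ) (t : ℝ) : 0 ≤ rearr g t :=
  Real.sInf_nonneg fun _ hl => hl.1

lemma rearr_le {g : ℝ → ℝ} {t l : ℝ} (hl : 0 ≤ l)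
    (h : volume {x : ℝ | 0 < x ∧ l < |g x|} ≤ ENNReal.ofReal t) : rearr g t ≤ l :=
  csInf_le ⟨0, fun _ hx => hx.1⟩ ⟨hl, h⟩

/-- Chebyshev: if `|g|^p` has finite lintegral on `(0,∞)`, then for every `s > 0` there is a
level `l ≥ 0` whose superlevel set has measure at most `s`. -/
lemma exists_level (g : ℝ → ℝ) (hg : Measurable g) {p : ℝ} (hp : 0 < p)
    (hC : ∫⁻ x in Set.Ioi (0:ℝ), ENNReal.ofReal (|g x| ^ p) ≠ ⊤)
    {s : ℝ} (hs : 0 < s) :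
    ∃ l : ℝ, 0 ≤ l ∧ volume {x : ℝ | 0 < x ∧ l < |g x|} ≤ ENNReal.ofReal s := by
  set C := ∫⁻ x in Set.Ioi (0:ℝ), ENNReal.ofReal (|g x| ^ p) with hCdef
  set l : ℝ := (C.toReal / s) ^ (1 / p) + 1 with hldef
  have hbase : 0 ≤ C.toReal / s := div_nonneg ENNReal.toReal_nonneg hs.le
  have hl1 : (C.toReal / s) ^ (1 / p) ≤ l := by
    simp only [hldef]; linarith
  have hl0 : 0 < l := by
    have h := Real.rpow_nonneg hbase (1 / p)
    simp only [hldef]; linarith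
  refine ⟨l, hl0.le, ?_⟩
  have hlp_pos : 0 < l ^ p := Real.rpow_pos_of_pos hl0 p
  -- the set as a restricted measure
  have hset : volume {x : ℝ | 0 < x ∧ l < |g x|}
      = (volume.restrict (Set.Ioi (0:ℝ))) {x : ℝ | l < |g x|} := by
    rw [Measure.restrict_apply' measurableSet_Ioi]
    congr 1
    ext x
    simp [mem_setOf_eq, and_comm]
  -- Chebyshev bound
  have cheb : ENNReal.ofReal (l ^ p) * volume {x : ℝ | 0 < x ∧ l < |g x|} ≤ C := by
    rw [hset]
    calc ENNReal.ofReal (l ^ p) * (volume.restrict (Set.Ioi (0:ℝ))) {x : ℝ | l < |g x|}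
        ≤ ENNReal.ofReal (l ^ p) *
          (volume.restrict (Set.Ioi (0:ℝ)))
            {x : ℝ | ENNReal.ofReal (l ^ p) ≤ ENNReal.ofReal (|g x| ^ p)} := by
          gcongr
          intro hx
          exact ENNReal.ofReal_le_ofReal
            (Real.rpow_le_rpow hl0.le (le_of_lt hx) hp.le)
      _ ≤ C := by
          have hmf : Measurable (fun x : ℝ => ENNReal.ofReal (|g x| ^ p)) :=
            (hg.abs.pow measurable_const).ennreal_ofReal
          exact mul_meas_ge_le_lintegral₀ hmf.aemeasurable _
  -- conclude
  have hCle : C ≤ ENNReal.ofReal (l ^ p) * ENNReal.ofReal s := by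
    have h1 : C.toReal / s ≤ l ^ p := by
      calc C.toReal / s = ((C.toReal / s) ^ (1 / p)) ^ p := by
            rw [one_div, Real.rpow_inv_rpow hbase hp.ne']
        _ ≤ l ^ p := Real.rpow_le_rpow (Real.rpow_nonneg hbase _) hl1 hp.le
    have h2 : C.toReal ≤ l ^ p * s := by
      rw [div_le_iff₀ hs] at h1; linarith
    calc C = ENNReal.ofReal C.toReal := (ENNReal.ofReal_toReal hC).symm
      _ ≤ ENNReal.ofReal (l ^ p * s) := ENNReal.ofReal_le_ofReal h2
      _ = ENNReal.ofReal (l ^ p) * ENNReal.ofReal s := ENNReal.ofReal_mul hlp_pos.le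
  have := le_trans cheb hCle
  rwa [ENNReal.mul_le_mul_iff_right (by simpa using hlp_pos) ENNReal.ofReal_ne_top] at this

lemma rearr_antitoneOn (g : ℝ → ℝ) (hg : Measurable g) {p : ℝ} (hp : 0 < p)
    (hC : ∫⁻ x in Set.Ioi (0:ℝ), ENNReal.ofReal (|g x| ^ p) ≠ ⊤) :
    AntitoneOn (rearr g) (Set.Ioi (0:ℝ)) := by
  intro s hs t ht hst
  apply csInf_le_csInf ⟨0, fun _ hx => hx.1⟩
  · obtain ⟨l, hl0, hl⟩ := exists_level g hg hp hC (mem_Ioi.mp hs)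
    exact ⟨l, hl0, hl⟩
  · intro l hl
    exact ⟨hl.1, hl.2.trans (ENNReal.ofReal_le_ofReal hst)⟩

/-- Superlevel sets of the rearrangement are no larger than those of `|g|`. -/
lemma meas_rearr_lt (g : ℝ → ℝ) {l : ℝ} (hl : 0 ≤ l) :
    volume {s : ℝ | 0 < s ∧ l < rearr g s} ≤ volume {x : ℝ | 0 < x ∧ l < |g x|} := by
  set D := volume {x : ℝ | 0 < x ∧ l < |g x|} with hD
  have hsub : {s : ℝ | 0 < s ∧ l < rearr g s} ⊆ {s : ℝ | 0 < s ∧ ENNReal.ofReal s < D} := by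
    rintro s ⟨hs, hls⟩
    refine ⟨hs, ?_⟩
    by_contra h
    exact absurd (rearr_le hl (not_lt.mp h)) (not_le.mpr hls)
  refine le_trans (measure_mono hsub) ?_
  rcases eq_top_or_lt_top D with h | h
  · exact h ▸ le_top
  · have hsub2 : {s : ℝ | 0 < s ∧ ENNReal.ofReal s < D} ⊆ Set.Ioc 0 D.toReal := by
      rintro s ⟨hs, h2⟩
      exact ⟨hs, ((ENNReal.ofReal_lt_iff_lt_toReal hs.le h.ne).mp h2).le⟩
    calc volume {s : ℝ | 0 < s ∧ ENNReal.ofReal s < D} ≤ volume (Set.Ioc 0 D.toReal) :=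
          measure_mono hsub2
      _ = ENNReal.ofReal D.toReal := by rw [Real.volume_Ioc, sub_zero]
      _ = D := ENNReal.ofReal_toReal h.ne

/-- Key comparison of the `p`-th power integrals, via the layer cake formula. -/
lemma lintegral_rearr_rpow_le (g : ℝ → ℝ) (hg : Measurable g) {p : ℝ} (hp : 0 < p)
    (hC : ∫⁻ x in Set.Ioi (0:ℝ), ENNReal.ofReal (|g x| ^ p) ≠ ⊤) :
    ∫⁻ s in Set.Ioi (0:ℝ), ENNReal.ofReal (rearr g s ^ p) ≤
      ∫⁻ x in Set.Ioi (0:ℝ), ENNReal.ofReal (|g x| ^ p) := by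
  have hmeas : AEMeasurable (rearr g) (volume.restrict (Set.Ioi (0:ℝ))) :=
    aemeasurable_restrict_of_antitoneOn measurableSet_Ioi (rearr_antitoneOn g hg hp hC)
  rw [lintegral_rpow_eq_lintegral_meas_lt_mul _
      (Filter.Eventually.of_forall fun s => rearr_nonneg g s) hmeas hp,
    lintegral_rpow_eq_lintegral_meas_lt_mul _
      (Filter.Eventually.of_forall fun x => abs_nonneg (g x)) hg.abs.aemeasurable.restrict hp]
  refine mul_le_mul_right (lintegral_mono_ae ?_) _
  filter_upwards [self_mem_ae_restrict (measurableSet_Ioi : MeasurableSet (Set.Ioi (0:ℝ)))]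
    with l hl
  refine mul_le_mul_left ?_ _
  rw [Measure.restrict_apply' measurableSet_Ioi, Measure.restrict_apply' measurableSet_Ioi]
  have e1 : {s : ℝ | l < rearr g s} ∩ Set.Ioi 0 = {s : ℝ | 0 < s ∧ l < rearr g s} := by
    ext s; simp [mem_setOf_eq, and_comm]
  have e2 : {x : ℝ | l < |g x|} ∩ Set.Ioi 0 = {x : ℝ | 0 < x ∧ l < |g x|} := by
    ext x; simp [mem_setOf_eq, and_comm]
  rw [e1, e2]
  exact meas_rearr_lt g (le_of_lt hl)

/-- `R_{p,q}` is bounded from `L^p(0,∞)` to weak-`L^p(0,∞)`, with constant one: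
`sup_{t>0} t^{1/p} (R_{p,q} g)^*(t) ≤ ‖g‖_{L^p(0,∞)}`. -/
theorem stmt_3 (p q : ℝ) (hp : 1 < p) (hpq : p < q)
    (g : ℝ → ℝ) (hg : Measurable g)
    (hgLp : MemLp g (ENNReal.ofReal p) (volume.restrict (Set.Ioi (0:ℝ)))) :
    ∀ t > 0, t ^ (1 / p) * rearr (Rop p q g) t ≤
      (∫ s in Set.Ioi (0:ℝ), |g s| ^ p) ^ (1 / p) := by
  intro t ht
  have hp0 : (0:ℝ) < p := lt_trans one_pos hp
  set A := ∫ s in Set.Ioi (0:ℝ), |g s| ^ p with hAdef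
  have hA0 : 0 ≤ A :=
    setIntegral_nonneg measurableSet_Ioi fun s _ => Real.rpow_nonneg (abs_nonneg _) p
  set N := A ^ (1 / p) with hNdef
  have hN0 : 0 ≤ N := Real.rpow_nonneg hA0 _
  -- integrability of |g|^p on (0,∞)
  have hInt : Integrable (fun x => |g x| ^ p) (volume.restrict (Set.Ioi (0:ℝ))) := by
    have h := hgLp.integrable_norm_rpow
      (by simp [ENNReal.ofReal_eq_zero]; linarith) ENNReal.ofReal_ne_top
    simpa [ENNReal.toReal_ofReal hp0.le, Real.norm_eq_abs] using h
  have hLeq : ∫⁻ x in Set.Ioi (0:ℝ), ENNReal.ofReal (|g x| ^ p) = ENNReal.ofReal A :=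
    (ofReal_integral_eq_lintegral_ofReal hInt
      (Filter.Eventually.of_forall fun x => Real.rpow_nonneg (abs_nonneg _) p)).symm
  have hC : ∫⁻ x in Set.Ioi (0:ℝ), ENNReal.ofReal (|g x| ^ p) ≠ ⊤ := by
    rw [hLeq]; exact ENNReal.ofReal_ne_top
  -- key integral bound : for any b, ∫_{(0,b]} (g^*)^p ≤ A
  have hJle : ∀ b : ℝ, (∫ s in Set.Ioc (0:ℝ) b, rearr g s ^ p) ≤ A := by
    intro b
    by_cases hint : IntegrableOn (fun s => rearr g s ^ p) (Set.Ioc (0:ℝ) b) volume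
    · have h1 : ENNReal.ofReal (∫ s in Set.Ioc (0:ℝ) b, rearr g s ^ p)
          = ∫⁻ s in Set.Ioc (0:ℝ) b, ENNReal.ofReal (rearr g s ^ p) :=
        ofReal_integral_eq_lintegral_ofReal hint
          (Filter.Eventually.of_forall fun s => Real.rpow_nonneg (rearr_nonneg g s) p)
      have h2 : (∫⁻ s in Set.Ioc (0:ℝ) b, ENNReal.ofReal (rearr g s ^ p))
          ≤ ∫⁻ s in Set.Ioi (0:ℝ), ENNReal.ofReal (rearr g s ^ p) :=
        lintegral_mono_set Ioc_subset_Ioi_self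
      have h3 := lintegral_rearr_rpow_le g hg hp0 hC
      have : ENNReal.ofReal (∫ s in Set.Ioc (0:ℝ) b, rearr g s ^ p) ≤ ENNReal.ofReal A := by
        rw [h1, ← hLeq]; exact le_trans h2 h3
      exact (ENNReal.ofReal_le_ofReal_iff hA0).mp this
    · rw [integral_undef hint]; exact hA0
  -- pointwise bound on Rop
  have hRop : ∀ x : ℝ, 0 < x → |Rop p q g x| ≤ N * x ^ (-(1 / p)) := by
    intro x hx
    set J := ∫ s in Set.Ioc (0:ℝ) (x ^ (q / (q - p))), rearr g s ^ p with hJdef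
    have hJ0 : 0 ≤ J :=
      setIntegral_nonneg measurableSet_Ioc fun s _ => Real.rpow_nonneg (rearr_nonneg g s) p
    have hxinv : 0 ≤ x⁻¹ := inv_nonneg.mpr hx.le
    have habs : |Rop p q g x| = (x⁻¹ * J) ^ (1 / p) := by
      rw [Rop]; exact abs_of_nonneg (Real.rpow_nonneg (mul_nonneg hxinv hJ0) _)
    rw [habs]
    calc (x⁻¹ * J) ^ (1 / p) ≤ (x⁻¹ * A) ^ (1 / p) :=
          Real.rpow_le_rpow (mul_nonneg hxinv hJ0)
            (mul_le_mul_of_nonneg_left (hJle _) hxinv) (by positivity)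
      _ = N * x ^ (-(1 / p)) := by
          rw [Real.mul_rpow hxinv hA0, Real.rpow_neg hx.le, ← Real.inv_rpow hx.le, mul_comm]
  -- conclude via the definition of rearr applied to Rop
  have hrearr : rearr (Rop p q g) t ≤ N * t ^ (-(1 / p)) := by
    refine rearr_le (mul_nonneg hN0 (Real.rpow_nonneg ht.le _)) ?_
    have hsub : {x : ℝ | 0 < x ∧ N * t ^ (-(1 / p)) < |Rop p q g x|} ⊆ Set.Ioc 0 t := by
      rintro x ⟨hx, hlt⟩
      refine ⟨hx, ?_⟩
      by_contra hxt
      push_neg at hxt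
      have h1 : x ^ (-(1 / p)) ≤ t ^ (-(1 / p)) :=
        Real.rpow_le_rpow_of_nonpos ht hxt.le (neg_nonpos.mpr (by positivity))
      have h2 : |Rop p q g x| ≤ N * t ^ (-(1 / p)) :=
        le_trans (hRop x hx) (mul_le_mul_of_nonneg_left h1 hN0)
      exact absurd (lt_of_lt_of_le hlt h2) (lt_irrefl _)
    calc volume {x : ℝ | 0 < x ∧ N * t ^ (-(1 / p)) < |Rop p q g x|}
        ≤ volume (Set.Ioc 0 t) := measure_mono hsub
      _ = ENNReal.ofReal t := by rw [Real.volume_Ioc, sub_zero]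
  calc t ^ (1 / p) * rearr (Rop p q g) t ≤ t ^ (1 / p) * (N * t ^ (-(1 / p))) :=
        mul_le_mul_of_nonneg_left hrearr (Real.rpow_nonneg ht.le _)
    _ = N := by
        rw [mul_comm N, ← mul_assoc, ← Real.rpow_add ht]
        simp
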